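/- Let D > 0 and E > 0 be real constants and let x₀ ∈ ℝ. Then there is no differentiable function x : [0, ∞) → ℝ satisfying x(0) = x₀ and x′(t) = D·x(t)² + E for all t ≥ 0; i.e., solutions of the averaged equation dX/dt = D X² + E do not exist globally in time (they blow up in finite time). -/

import Mathlib

/-- Solutions of the averaged equation `dX/dt = D X² + E` with `D, E > 0`
do not exist globally in time: there is no differentiable function on `[0, ∞)`
solving the ODE for all `t ≥ 0`. -/
theorem averaged_equation_no_global_solution
    (D E x₀ : ℝ) (hD : 0 < D) (hE : 0 < E) :
    ¬ ∃ x : ℝ → ℝ, x 0 = x₀ ∧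
      ∀ t ∈ Set.Ici (0 : ℝ),
        HasDerivWithinAt x (D * (x t) ^ 2 + E) (Set.Ici (0 : ℝ)) t := by
  rintro ⟨x, hx0, hx⟩
  set a : ℝ := Real.sqrt (D / E) with ha
  set c : ℝ := Real.sqrt (D * E) with hc
  have ha_pos : 0 < a := Real.sqrt_pos.2 (div_pos hD hE)
  have hc_pos : 0 < c := Real.sqrt_pos.2 (mul_pos hD hE)
  have ha_sq : a ^ 2 = D / E := Real.sq_sqrt (le_of_lt (div_pos hD hE))
  have haE : a * E = c := by
    rw [ha, hc]
    rw [show D * E = (D / E) * E ^ 2 by field_simp]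
    rw [Real.sqrt_mul (le_of_lt (div_pos hD hE)), Real.sqrt_sq hE.le]
  -- g t = arctan (a * x t) - c * t has zero derivative on Ici 0
  set g : ℝ → ℝ := fun t => Real.arctan (a * x t) - c * t with hg
  have hderiv : ∀ t ∈ Set.Ici (0 : ℝ), HasDerivWithinAt g 0 (Set.Ici (0 : ℝ)) t := by
    intro t ht
    have h1 : HasDerivWithinAt (fun t => a * x t) (a * (D * (x t) ^ 2 + E))
        (Set.Ici (0 : ℝ)) t := (hx t ht).const_mul a
    have h2 : HasDerivWithinAt (fun t => Real.arctan (a * x t))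
        ((1 / (1 + (a * x t) ^ 2)) * (a * (D * (x t) ^ 2 + E)))
        (Set.Ici (0 : ℝ)) t :=
      by simpa [Function.comp_def] using (Real.hasDerivAt_arctan (a * x t)).comp_hasDerivWithinAt t h1
    have key : (1 / (1 + (a * x t) ^ 2)) * (a * (D * (x t) ^ 2 + E)) = c := by
      have hden : 1 + (a * x t) ^ 2 = (E + D * (x t) ^ 2) / E := by
        rw [mul_pow, ha_sq]; field_simp
      rw [hden, ← haE]
      have hpos : E + D * (x t) ^ 2 > 0 :=
        add_pos_of_pos_of_nonneg hE (mul_nonneg hD.le (sq_nonneg _))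
      field_simp
      ring
    rw [key] at h2
    have : HasDerivWithinAt g (c - c) (Set.Ici (0 : ℝ)) t := by
      have h3 : HasDerivWithinAt (fun y : ℝ => c * y) c (Set.Ici (0 : ℝ)) t := by
        simpa using ((hasDerivAt_id t).const_mul c).hasDerivWithinAt
      exact h2.sub h3
    simpa using this
  have hconv : Convex ℝ (Set.Ici (0 : ℝ)) := convex_Ici 0
  have hdiff : DifferentiableOn ℝ g (Set.Ici (0 : ℝ)) :=
    fun t ht => (hderiv t ht).differentiableWithinAt
  have hfd : ∀ t ∈ Set.Ici (0 : ℝ), fderivWithin ℝ g (Set.Ici (0 : ℝ)) t = 0 := by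
    intro t ht
    have := (hderiv t ht).hasFDerivWithinAt.fderivWithin
      ((uniqueDiffOn_Ici (0 : ℝ)) t ht)
    rw [this]
    ext1; simp
  set T : ℝ := Real.pi / c with hT
  have hT_pos : 0 < T := div_pos Real.pi_pos hc_pos
  have hconst : g T = g 0 :=
    hconv.is_const_of_fderivWithin_eq_zero hdiff hfd (Set.mem_Ici.2 hT_pos.le) Set.self_mem_Ici
  have hgT : Real.arctan (a * x T) = Real.arctan (a * x 0) + c * T := by
    have : Real.arctan (a * x T) - c * T = Real.arctan (a * x 0) - c * 0 := hconst
    linarith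
  have hcT : c * T = Real.pi := by
    rw [hT]; field_simp
  have hlt : Real.arctan (a * x T) < Real.pi / 2 := Real.arctan_lt_pi_div_two _
  have hgt : -(Real.pi / 2) < Real.arctan (a * x 0) := Real.neg_pi_div_two_lt_arctan _
  rw [hgT, hcT] at hlt
  linarith
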